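/- Let k > 0 satisfy k ≥ √(Q/c³) · √(max_{x∈[c,d]} |(k/2)(x² − cd) + V_c − ((V_d − V_c)/(d − c))·c|), where Q = max_{x∈[c,d]} q(x). Then the quadratic function α₂(x) = (k/2)x² + ((V_d − V_c)/(d − c) − (k/2)(d + c))·x + (k/2)cd + V_c − ((V_d − V_c)/(d − c))·c satisfies α₂(c) = V_c, α₂(d) = V_d, and α₂''(x) + H(x, α₂(x), α₂'(x)) ≥ 0 for all x ∈ [c,d]; i.e., α₂ is a lower solution of the Dirichlet problem. -/

import Mathlib

set_option maxHeartbeats 2000000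


theorem stmt_4 (c d Vc Vd Q k : ℝ) (hc : 0 < c) (hcd : c < d) (p q : ℝ → ℝ)
    (hp : ∀ x ∈ Set.Icc c d, 0 ≤ p x) (hq : ∀ x ∈ Set.Icc c d, 0 ≤ q x)
    (hpc : ContinuousOn p (Set.Icc c d)) (hqc : ContinuousOn q (Set.Icc c d))
    (hQ : IsGreatest (q '' Set.Icc c d) Q)
    (hk : 0 < k)
    (hkk : k ≥ Real.sqrt (Q / c ^ 3) *
      Real.sqrt (sSup ((fun x => |k / 2 * (x ^ 2 - c * d) + Vc - (Vd - Vc) / (d - c) * c|) ''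
        Set.Icc c d))) :
    (fun x => k / 2 * x ^ 2 + ((Vd - Vc) / (d - c) - k / 2 * (d + c)) * x +
        k / 2 * (c * d) + Vc - (Vd - Vc) / (d - c) * c) c = Vc ∧
    (fun x => k / 2 * x ^ 2 + ((Vd - Vc) / (d - c) - k / 2 * (d + c)) * x +
        k / 2 * (c * d) + Vc - (Vd - Vc) / (d - c) * c) d = Vd ∧
    ∀ x ∈ Set.Icc c d,
      deriv (deriv (fun x => k / 2 * x ^ 2 + ((Vd - Vc) / (d - c) - k / 2 * (d + c)) * x +
        k / 2 * (c * d) + Vc - (Vd - Vc) / (d - c) * c)) x +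
        (p x * x ^ 2 - Real.sqrt ((p x) ^ 2 * x ^ 4 +
          4 * x ^ 3 * q x *
            |x * deriv (fun x => k / 2 * x ^ 2 + ((Vd - Vc) / (d - c) - k / 2 * (d + c)) * x +
              k / 2 * (c * d) + Vc - (Vd - Vc) / (d - c) * c) x -
             (k / 2 * x ^ 2 + ((Vd - Vc) / (d - c) - k / 2 * (d + c)) * x +
              k / 2 * (c * d) + Vc - (Vd - Vc) / (d - c) * c)|)) / (2 * x ^ 3) ≥ 0 := by
  have hdc : d - c ≠ 0 := sub_ne_zero.mpr (ne_of_gt hcd)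
  set L : ℝ := (Vd - Vc) / (d - c) with hL
  set M : ℝ := L - k / 2 * (d + c) with hM
  have hLdc : L * (d - c) = Vd - Vc := by rw [hL]; field_simp
  -- derivative computations
  have hder : ∀ y : ℝ, HasDerivAt (fun x => k / 2 * x ^ 2 + M * x +
      k / 2 * (c * d) + Vc - L * c) (k * y + M) y := by
    intro y
    have h1 : HasDerivAt (fun x : ℝ => k / 2 * x ^ 2) (k / 2 * (2 * y ^ 1)) y := by
      simpa using (hasDerivAt_pow 2 y).const_mul (k / 2)
    have h2 : HasDerivAt (fun x : ℝ => M * x) (M * 1) y := (hasDerivAt_id y).const_mul M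
    have h3 := (((h1.add h2).add_const (k / 2 * (c * d))).add_const Vc).sub_const (L * c)
    exact h3.congr_deriv (by ring)
  have hderiv1 : deriv (fun x => k / 2 * x ^ 2 + M * x + k / 2 * (c * d) + Vc - L * c) =
      fun y => k * y + M := funext fun y => (hder y).deriv
  have hderiv2 : deriv (fun y : ℝ => k * y + M) = fun _ => k := by
    funext y
    have : HasDerivAt (fun y : ℝ => k * y + M) k y := by
      simpa using ((hasDerivAt_id y).const_mul k).add_const M
    exact this.deriv
  refine ⟨by simp only [hM]; ring, by simp only [hM]; linear_combination hLdc, ?_⟩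
  intro x hx
  simp only [hderiv1, hderiv2]
  clear_value M
  have hxc : c ≤ x := hx.1
  have hxd : x ≤ d := hx.2
  have hxpos : 0 < x := lt_of_lt_of_le hc hxc
  have h2x3 : (0:ℝ) < 2 * x ^ 3 := by positivity
  have hc3 : (0:ℝ) < c ^ 3 := by positivity
  have hcx3 : c ^ 3 ≤ x ^ 3 := by
    have := mul_le_mul (mul_le_mul hxc hxc hc.le hxpos.le) hxc hc.le
      (mul_nonneg hxpos.le hxpos.le)
    nlinarith
  -- sup bound facts
  set S : ℝ := sSup ((fun x => |k / 2 * (x ^ 2 - c * d) + Vc - L * c|) '' Set.Icc c d) with hS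
  have hgc : Continuous (fun x : ℝ => |k / 2 * (x ^ 2 - c * d) + Vc - L * c|) := by
    fun_prop
  have hbdd : BddAbove ((fun x : ℝ => |k / 2 * (x ^ 2 - c * d) + Vc - L * c|) '' Set.Icc c d) :=
    (isCompact_Icc.image hgc).bddAbove
  have hle : ∀ t ∈ Set.Icc c d, |k / 2 * (t ^ 2 - c * d) + Vc - L * c| ≤ S :=
    fun t ht => le_csSup hbdd ⟨t, ht, rfl⟩
  have hS0 : 0 ≤ S := le_trans (abs_nonneg _) (hle c ⟨le_refl c, hcd.le⟩)
  clear_value S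
  have hQ0 : 0 ≤ Q := by
    obtain ⟨x0, hx0, hqx0⟩ := hQ.1
    exact hqx0 ▸ hq x0 hx0
  have hQx : q x ≤ Q := hQ.2 ⟨x, hx, rfl⟩
  have hqx0 : 0 ≤ q x := hq x hx
  have hpx0 : 0 ≤ p x := hp x hx
  -- k^2 bound : Q * S ≤ k^2 * c^3
  have hk2 : Q * S ≤ k ^ 2 * c ^ 3 := by
    have hs1 := Real.sq_sqrt (div_nonneg hQ0 hc3.le)
    have hs2 := Real.sq_sqrt hS0
    have hn1 := Real.sqrt_nonneg (Q / c ^ 3)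
    have hn2 := Real.sqrt_nonneg S
    have hmm := mul_le_mul hkk hkk (mul_nonneg hn1 hn2) (le_trans (mul_nonneg hn1 hn2) hkk)
    have hk2' : Q / c ^ 3 * S ≤ k ^ 2 := by nlinarith [hmm]
    have := mul_le_mul_of_nonneg_right hk2' hc3.le
    have he : Q / c ^ 3 * S * c ^ 3 = Q * S := by field_simp
    linarith [he ▸ this]
  -- abbreviation v
  set v : ℝ := Vc - L * c with hv
  have habs : x * (k * x + M) - (k / 2 * x ^ 2 + M * x + k / 2 * (c * d) + Vc - L * c)
      = k / 2 * (x ^ 2 - c * d) - v := by rw [hv]; ring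
  have hax : |k / 2 * (x ^ 2 - c * d) + v| ≤ S := by
    have h := hle x hx
    have e : k / 2 * (x ^ 2 - c * d) + Vc - L * c = k / 2 * (x ^ 2 - c * d) + v := by
      rw [hv]; ring
    rwa [e] at h
  have had : |k / 2 * (d ^ 2 - c * d) + v| ≤ S := by
    have h := hle d ⟨hcd.le, le_refl d⟩
    have e : k / 2 * (d ^ 2 - c * d) + Vc - L * c = k / 2 * (d ^ 2 - c * d) + v := by
      rw [hv]; ring
    rwa [e] at h
  have hac : |k / 2 * (c ^ 2 - c * d) + v| ≤ S := by
    have h := hle c ⟨le_refl c, hcd.le⟩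
    have e : k / 2 * (c ^ 2 - c * d) + Vc - L * c = k / 2 * (c ^ 2 - c * d) + v := by
      rw [hv]; ring
    rwa [e] at h
  clear_value v
  clear_value L
  obtain ⟨hax1, hax2⟩ := abs_le.mp hax
  obtain ⟨had1, had2⟩ := abs_le.mp had
  obtain ⟨hac1, hac2⟩ := abs_le.mp hac
  clear hax had hac hS hle hbdd hgc hkk hder hderiv1 hderiv2 hLdc hL hM hv hp hq hpc hqc hQ hdc
  have hSc3 : S * c ^ 3 ≤ S * x ^ 3 := mul_le_mul_of_nonneg_left hcx3 hS0
  -- key bound: |u - v| * c^3 ≤ x^3 * S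
  have key : |k / 2 * (x ^ 2 - c * d) - v| * c ^ 3 ≤ x ^ 3 * S := by
    rcases abs_cases (k / 2 * (x ^ 2 - c * d) - v) with ⟨heq, _⟩ | ⟨heq, _⟩ <;> rw [heq]
    · rcases le_or_gt 0 v with hv0 | hv0
      · -- u - v ≤ u + v ≤ S
        have h1 : k / 2 * (x ^ 2 - c * d) - v ≤ S := by linarith [hax2]
        have h2 := mul_le_mul_of_nonneg_right h1 hc3.le
        linarith [h2, hSc3]
      · rcases le_or_gt (k / 2 * (x ^ 2 - c * d)) 0 with hu0 | hu0
        · -- u ≤ 0 : u - v ≤ -v ≤ S + k/2(c²-cd) ≤ S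
          have hneg : k / 2 * (c ^ 2 - c * d) ≤ 0 := by
            nlinarith [mul_nonneg (mul_nonneg hk.le hc.le) (sub_nonneg.2 hcd.le)]
          have h1 : k / 2 * (x ^ 2 - c * d) - v ≤ S := by linarith [hac1]
          have h2 := mul_le_mul_of_nonneg_right h1 hc3.le
          linarith [h2, hSc3]
        · -- hard case: v < 0 < u
          have hkcx : 0 ≤ k * (c * d - c * x) :=
            mul_nonneg hk.le (sub_nonneg.2 (mul_le_mul_of_nonneg_left hxd hc.le))
          have hstep : k / 2 * (x ^ 2 - c * d) - v ≤ S + k / 2 * (x - c) ^ 2 := by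
            nlinarith [hac1, hkcx]
          have hmul1 := mul_le_mul_of_nonneg_right hstep hc3.le
          have hS2 : k / 4 * (x ^ 2 - c ^ 2) ≤ S := by linarith [hax2, hac1]
          have hpoly : 2 * c ^ 3 ≤ (x ^ 2 + c * x + c ^ 2) * (x + c) := by
            nlinarith [hxc, hc, mul_pos hc hc, sq_nonneg (x - c),
              mul_nonneg (sub_nonneg.2 hxc) (mul_nonneg hc.le hc.le),
              mul_nonneg (sub_nonneg.2 hxc) (mul_nonneg hc.le hxpos.le),
              mul_nonneg (sub_nonneg.2 hxc) (mul_nonneg hxpos.le hxpos.le)]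
          have hprod : 0 ≤ k / 4 * (x - c) ^ 2 * ((x ^ 2 + c * x + c ^ 2) * (x + c) - 2 * c ^ 3) :=
            mul_nonneg (mul_nonneg (by positivity) (sq_nonneg _)) (by linarith)
          have h1 : k / 2 * (x - c) ^ 2 * c ^ 3 ≤ (x ^ 3 - c ^ 3) * (k / 4 * (x ^ 2 - c ^ 2)) := by
            nlinarith [hprod]
          have h2 : (x ^ 3 - c ^ 3) * (k / 4 * (x ^ 2 - c ^ 2)) ≤ (x ^ 3 - c ^ 3) * S :=
            mul_le_mul_of_nonneg_left hS2 (by linarith [hcx3])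
          nlinarith [hmul1, h1, h2]
    · -- v - u ≤ S
      have hkx2 : 0 ≤ k * (x * x - c * c) :=
        mul_nonneg hk.le (sub_nonneg.2 (mul_self_le_mul_self hc.le hxc))
      have hkd2 : 0 ≤ k * (d - c) ^ 2 := mul_nonneg hk.le (sq_nonneg _)
      have h1 : -(k / 2 * (x ^ 2 - c * d) - v) ≤ S := by nlinarith [had1, hkx2, hkd2]
      have h2 := mul_le_mul_of_nonneg_right h1 hc3.le
      linarith [h2, hSc3]
  -- q x * |u - v| ≤ k^2 * x^3
  have hqA : q x * |k / 2 * (x ^ 2 - c * d) - v| ≤ k ^ 2 * x ^ 3 := by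
    have hA0 : 0 ≤ |k / 2 * (x ^ 2 - c * d) - v| := abs_nonneg _
    have h1 : q x * |k / 2 * (x ^ 2 - c * d) - v| * c ^ 3 ≤ Q * (x ^ 3 * S) := by
      calc q x * |k / 2 * (x ^ 2 - c * d) - v| * c ^ 3
          ≤ Q * (|k / 2 * (x ^ 2 - c * d) - v| * c ^ 3) := by
            rw [mul_assoc]
            exact mul_le_mul_of_nonneg_right hQx (by positivity)
      _ ≤ Q * (x ^ 3 * S) := mul_le_mul_of_nonneg_left key hQ0
    have h2 : Q * (x ^ 3 * S) ≤ k ^ 2 * x ^ 3 * c ^ 3 := by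
      have := mul_le_mul_of_nonneg_left hk2 (pow_nonneg hxpos.le 3)
      nlinarith [this]
    have h3 := le_trans h1 h2
    exact le_of_mul_le_mul_right (by linarith) hc3
  -- final inequality
  have hsq : Real.sqrt ((p x) ^ 2 * x ^ 4 + 4 * x ^ 3 * q x *
      |x * (k * x + M) - (k / 2 * x ^ 2 + M * x + k / 2 * (c * d) + Vc - L * c)|)
      ≤ 2 * k * x ^ 3 + p x * x ^ 2 := by
    rw [habs]
    have hrhs : (0:ℝ) ≤ 2 * k * x ^ 3 + p x * x ^ 2 := by positivity
    rw [show (2 * k * x ^ 3 + p x * x ^ 2) = Real.sqrt ((2 * k * x ^ 3 + p x * x ^ 2) ^ 2) from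
      (Real.sqrt_sq hrhs).symm]
    apply Real.sqrt_le_sqrt
    have h4 := mul_le_mul_of_nonneg_left hqA (by positivity : (0:ℝ) ≤ 4 * x ^ 3)
    nlinarith [h4, mul_nonneg (mul_nonneg hk.le hpx0) (pow_nonneg hxpos.le 5)]
  have hdiv : -k ≤ (p x * x ^ 2 - Real.sqrt ((p x) ^ 2 * x ^ 4 + 4 * x ^ 3 * q x *
      |x * (k * x + M) - (k / 2 * x ^ 2 + M * x + k / 2 * (c * d) + Vc - L * c)|)) /
      (2 * x ^ 3) := by
    rw [le_div_iff₀ h2x3]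
    nlinarith [hsq]
  linarith [hdiv]
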